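/- For orthogonal projections P and Q on a finite-dimensional Hilbert space, ‖PQ - P∧Q‖ equals the supremum of |⟨φ,ψ⟩|/(‖φ‖‖ψ‖) over nonzero φ ∈ ran P, ψ ∈ ran Q with φ, ψ orthogonal to ran P ∩ ran Q. -/

import Mathlib

open scoped InnerProductSpace ComplexConjugate

/-- The orthogonal projection `P ∧ Q` onto `ran P ∩ ran Q`. -/
noncomputable def projWedge {H : Type*} [NormedAddCommGroup H] [InnerProductSpace ℂ H]
    [FiniteDimensional ℂ H] (E F : H →L[ℂ] H) : H →L[ℂ] H :=
  (LinearMap.range (E : H →ₗ[ℂ] H) ⊓ LinearMap.range (F : H →ₗ[ℂ] H)).subtypeL ∘L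
    Submodule.orthogonalProjectionOnto (LinearMap.range (E : H →ₗ[ℂ] H) ⊓ LinearMap.range (F : H →ₗ[ℂ] H))

/-- `‖PQ - P∧Q‖` equals the supremum of `|⟨φ,ψ⟩|/(‖φ‖‖ψ‖)` over nonzero `φ ∈ ran P`,
`ψ ∈ ran Q` orthogonal to `ran P ∩ ran Q` (the supremum of the empty set being `0`). -/
theorem stmt5 {H : Type*} [NormedAddCommGroup H] [InnerProductSpace ℂ H]
    [FiniteDimensional ℂ H] (P Q : H →L[ℂ] H)
    (hP : IsSelfAdjoint P) (hP2 : P ∘L P = P)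
    (hQ : IsSelfAdjoint Q) (hQ2 : Q ∘L Q = Q) :
    ‖P ∘L Q - projWedge P Q‖ =
      sSup {r : ℝ | ∃ φ ψ : H, φ ∈ LinearMap.range (P : H →ₗ[ℂ] H) ∧ ψ ∈ LinearMap.range (Q : H →ₗ[ℂ] H) ∧
        φ ≠ 0 ∧ ψ ≠ 0 ∧
        φ ∈ (LinearMap.range (P : H →ₗ[ℂ] H) ⊓ LinearMap.range (Q : H →ₗ[ℂ] H) : Submodule ℂ H)ᗮ ∧
        ψ ∈ (LinearMap.range (P : H →ₗ[ℂ] H) ⊓ LinearMap.range (Q : H →ₗ[ℂ] H) : Submodule ℂ H)ᗮ ∧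
        r = ‖(inner ℂ φ ψ : ℂ)‖ / (‖φ‖ * ‖ψ‖)} := by
  classical
  have hPs : ∀ x y : H, ⟪P x, y⟫_ℂ = ⟪x, P y⟫_ℂ :=
    ContinuousLinearMap.isSelfAdjoint_iff_isSymmetric.mp hP
  have hQs : ∀ x y : H, ⟪Q x, y⟫_ℂ = ⟪x, Q y⟫_ℂ :=
    ContinuousLinearMap.isSelfAdjoint_iff_isSymmetric.mp hQ
  have hPmem : ∀ x ∈ LinearMap.range (P : H →ₗ[ℂ] H), P x = x := by
    rintro _ ⟨y, rfl⟩
    have := congrArg (fun T : H →L[ℂ] H => T y) hP2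
    simpa using this
  have hQmem : ∀ x ∈ LinearMap.range (Q : H →ₗ[ℂ] H), Q x = x := by
    rintro _ ⟨y, rfl⟩
    have := congrArg (fun T : H →L[ℂ] H => T y) hQ2
    simpa using this
  set W : Submodule ℂ H := LinearMap.range (P : H →ₗ[ℂ] H) ⊓ LinearMap.range (Q : H →ₗ[ℂ] H) with hW
  set F : H → H := fun x => (W.orthogonalProjectionOnto x : H) with hF
  have hFs : ∀ x y : H, ⟪F x, y⟫_ℂ = ⟪x, F y⟫_ℂ := fun x y =>
    Submodule.inner_starProjection_left_eq_right (K := W) x y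
  have hFmem : ∀ x, F x ∈ W := fun x => (W.orthogonalProjectionOnto x).2
  have hFid : ∀ x ∈ W, F x = x := fun x hx => Submodule.starProjection_eq_self_iff.mpr hx
  have hF0 : ∀ x ∈ Wᗮ, F x = 0 := fun x hx => by
    show (W.orthogonalProjectionOnto x : H) = 0
    rw [Submodule.orthogonalProjectionOnto_apply_of_mem_orthogonal hx]
    rfl
  have hFsub : ∀ a b, F (a - b) = F a - F b := fun a b => by simp [hF, map_sub]
  have hWP : W ≤ LinearMap.range (P : H →ₗ[ℂ] H) := by rw [hW]; exact inf_le_left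
  have hWQ : W ≤ LinearMap.range (Q : H →ₗ[ℂ] H) := by rw [hW]; exact inf_le_right
  have hPF : ∀ x, P (F x) = F x := fun x => hPmem _ (hWP (hFmem x))
  have hQF : ∀ x, Q (F x) = F x := fun x => hQmem _ (hWQ (hFmem x))
  have hFP : ∀ x, F (P x) = F x := by
    intro x
    have hm : P x - x ∈ Wᗮ := by
      rw [Submodule.mem_orthogonal]
      intro w hw
      rw [inner_sub_right, ← hPs w x, hPmem w (hWP hw), sub_self]
    have h0 : F (P x - x) = 0 := hF0 _ hm
    rw [hFsub] at h0
    exact sub_eq_zero.mp h0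
  have hFQ : ∀ x, F (Q x) = F x := by
    intro x
    have hm : Q x - x ∈ Wᗮ := by
      rw [Submodule.mem_orthogonal]
      intro w hw
      rw [inner_sub_right, ← hQs w x, hQmem w (hWQ hw), sub_self]
    have h0 : F (Q x - x) = 0 := hF0 _ hm
    rw [hFsub] at h0
    exact sub_eq_zero.mp h0
  set A : H →L[ℂ] H := P ∘L Q - projWedge P Q with hA
  have hApt : ∀ x, A x = P (Q x) - F x := fun x => rfl
  -- ranges and orthogonality of the "reduced" vectors
  have hP'ran : ∀ y, P y - F y ∈ LinearMap.range (P : H →ₗ[ℂ] H) :=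
    fun y => ⟨P y - F y, by change P (P y - F y) = _; rw [map_sub, hPmem (P y) ⟨y, rfl⟩, hPF y]⟩
  have hQ'ran : ∀ y, Q y - F y ∈ LinearMap.range (Q : H →ₗ[ℂ] H) :=
    fun y => ⟨Q y - F y, by change Q (Q y - F y) = _; rw [map_sub, hQmem (Q y) ⟨y, rfl⟩, hQF y]⟩
  have hP'orth : ∀ y, P y - F y ∈ Wᗮ := by
    intro y
    rw [Submodule.mem_orthogonal]
    intro w hw
    rw [inner_sub_right, ← hPs w y, ← hFs w y, hPmem w (hWP hw), hFid w hw, sub_self]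
  have hQ'orth : ∀ y, Q y - F y ∈ Wᗮ := by
    intro y
    rw [Submodule.mem_orthogonal]
    intro w hw
    rw [inner_sub_right, ← hQs w y, ← hFs w y, hQmem w (hWQ hw), hFid w hw, sub_self]
  -- generic contraction lemma for symmetric idempotent maps
  have hcontr : ∀ T : H → H, (∀ a b, ⟪T a, b⟫_ℂ = ⟪a, T b⟫_ℂ) → (∀ a, T (T a) = T a) →
      ∀ a, ‖T a‖ ≤ ‖a‖ := by
    intro T hs hi a
    by_cases h : T a = 0
    · simp [h]
    · have h1 : ⟪T a, T a⟫_ℂ = ⟪a, T a⟫_ℂ := by rw [hs a (T a), hi a]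
      have h2 : (‖T a‖ : ℝ) ^ 2 ≤ ‖a‖ * ‖T a‖ := by
        have := norm_inner_le_norm (𝕜 := ℂ) a (T a)
        calc (‖T a‖ : ℝ) ^ 2 = ‖⟪T a, T a⟫_ℂ‖ := by
              rw [inner_self_eq_norm_sq_to_K]; norm_num
          _ = ‖⟪a, T a⟫_ℂ‖ := by rw [h1]
          _ ≤ ‖a‖ * ‖T a‖ := this
      have hpos : 0 < ‖T a‖ := norm_pos_iff.mpr h
      nlinarith
  have hnormQ' : ∀ x, ‖Q x - F x‖ ≤ ‖x‖ := by
    refine hcontr (fun y => Q y - F y) ?_ ?_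
    · intro a b
      rw [inner_sub_left, inner_sub_right, hQs, hFs]
    · intro a
      rw [map_sub, hFsub, hQmem (Q a) ⟨a, rfl⟩, hQF a, hFQ a, hFid (F a) (hFmem a)]
      abel
  -- key identity : A x = P' Q' x
  have hAP' : ∀ x, A x = P (Q x - F x) - F (Q x - F x) := by
    intro x
    rw [hApt, map_sub, hFsub, hPF x, hFQ x, hFid (F x) (hFmem x)]
    abel
  set S : Set ℝ := {r : ℝ | ∃ φ ψ : H, φ ∈ LinearMap.range (P : H →ₗ[ℂ] H) ∧ ψ ∈ LinearMap.range (Q : H →ₗ[ℂ] H) ∧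
        φ ≠ 0 ∧ ψ ≠ 0 ∧ φ ∈ Wᗮ ∧ ψ ∈ Wᗮ ∧
        r = ‖(inner ℂ φ ψ : ℂ)‖ / (‖φ‖ * ‖ψ‖)} with hS
  show ‖A‖ = sSup S
  -- every element of S is at most ‖A‖
  have hub : ∀ r ∈ S, r ≤ ‖A‖ := by
    intro r hr
    rw [hS] at hr
    obtain ⟨φ, ψ, hφ, hψ, hφ0, hψ0, hφo, hψo, rfl⟩ := hr
    have h1 : A ψ = P ψ := by rw [hApt, hQmem ψ hψ, hF0 ψ hψo, sub_zero]
    have h2 : ⟪φ, ψ⟫_ℂ = ⟪φ, A ψ⟫_ℂ := by rw [h1, ← hPs, hPmem φ hφ]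
    have h3 : ‖⟪φ, ψ⟫_ℂ‖ ≤ ‖A‖ * (‖φ‖ * ‖ψ‖) := by
      rw [h2]
      calc ‖⟪φ, A ψ⟫_ℂ‖ ≤ ‖φ‖ * ‖A ψ‖ := norm_inner_le_norm _ _
        _ ≤ ‖φ‖ * (‖A‖ * ‖ψ‖) := by
            exact mul_le_mul_of_nonneg_left (A.le_opNorm ψ) (norm_nonneg φ)
        _ = ‖A‖ * (‖φ‖ * ‖ψ‖) := by ring
    have hφp : 0 < ‖φ‖ := norm_pos_iff.mpr hφ0
    have hψp : 0 < ‖ψ‖ := norm_pos_iff.mpr hψ0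
    rw [div_le_iff₀ (by positivity)]
    exact h3
  rcases Set.eq_empty_or_nonempty S with hSe | hSne
  · -- empty sup is 0, and A must be 0
    have hA0 : A = 0 := by
      ext x
      simp only [ContinuousLinearMap.zero_apply]
      by_contra hax
      have hψ0 : Q x - F x ≠ 0 := by
        intro h0
        apply hax
        rw [hAP' x, h0]
        simp [hF]
      have hmem : ‖(inner ℂ (A x) (Q x - F x) : ℂ)‖ / (‖A x‖ * ‖Q x - F x‖) ∈ S := by
        rw [hS]
        exact ⟨A x, Q x - F x, by rw [hAP' x]; exact hP'ran _, hQ'ran x, hax, hψ0,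
          by rw [hAP' x]; exact hP'orth _, hQ'orth x, rfl⟩
      rw [hSe] at hmem
      exact hmem
    rw [hA0, hSe, Real.sSup_empty, norm_zero]
  · have hbdd : BddAbove S := ⟨‖A‖, fun r hr => hub r hr⟩
    obtain ⟨r0, hr0⟩ := hSne
    have hr0nn : 0 ≤ r0 := by
      rw [hS] at hr0
      obtain ⟨φ, ψ, _, _, _, _, _, _, rfl⟩ := hr0
      positivity
    have hc0 : 0 ≤ sSup S := le_trans hr0nn (le_csSup hbdd hr0)
    refine le_antisymm ?_ (csSup_le ⟨r0, hr0⟩ hub)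
    refine A.opNorm_le_bound hc0 ?_
    intro x
    by_cases hax : A x = 0
    · rw [hax, norm_zero]; positivity
    · have hψ0 : Q x - F x ≠ 0 := by
        intro h0
        apply hax
        rw [hAP' x, h0]
        simp [hF]
      have hmemP : A x ∈ LinearMap.range (P : H →ₗ[ℂ] H) := by rw [hAP' x]; exact hP'ran _
      have hmemO : A x ∈ Wᗮ := by rw [hAP' x]; exact hP'orth _
      have hsym' : ∀ z y : H, ⟪P z - F z, y⟫_ℂ = ⟪z, P y - F y⟫_ℂ := by
        intro z y
        rw [inner_sub_left, inner_sub_right, hPs, hFs]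
      have hsq : ⟪A x, A x⟫_ℂ = ⟪Q x - F x, A x⟫_ℂ := by
        nth_rewrite 1 [hAP' x]
        rw [hsym', hPmem (A x) hmemP, hF0 (A x) hmemO, sub_zero]
      have hinner : ‖⟪A x, Q x - F x⟫_ℂ‖ = ‖A x‖ ^ 2 := by
        rw [← inner_conj_symm (A x) (Q x - F x), ← hsq, inner_self_eq_norm_sq_to_K]
        simp
      have hmem : ‖(inner ℂ (A x) (Q x - F x) : ℂ)‖ / (‖A x‖ * ‖Q x - F x‖) ∈ S := by
        rw [hS]
        exact ⟨A x, Q x - F x, hmemP, hQ'ran x, hax, hψ0, hmemO, hQ'orth x, rfl⟩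
      have hle := le_csSup hbdd hmem
      have hAp : 0 < ‖A x‖ := norm_pos_iff.mpr hax
      have hψp : 0 < ‖Q x - F x‖ := norm_pos_iff.mpr hψ0
      have hψx : ‖Q x - F x‖ ≤ ‖x‖ := hnormQ' x
      rw [hinner, div_le_iff₀ (by positivity)] at hle
      have h6 : ‖A x‖ ^ 2 ≤ sSup S * (‖A x‖ * ‖x‖) :=
        le_trans hle (mul_le_mul_of_nonneg_left
          (mul_le_mul_of_nonneg_left hψx (norm_nonneg _)) hc0)
      have h7 : ‖A x‖ * ‖A x‖ ≤ (sSup S * ‖x‖) * ‖A x‖ := by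
        calc ‖A x‖ * ‖A x‖ = ‖A x‖ ^ 2 := (pow_two _).symm
          _ ≤ sSup S * (‖A x‖ * ‖x‖) := h6
          _ = (sSup S * ‖x‖) * ‖A x‖ := by ring
      exact le_of_mul_le_mul_right h7 hAp
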